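/- For every positive integer n there exists a prime l with n < l ≤ 2n (Bertrand's postulate); consequently, for each n and each m < n/2 there exists a lattice of rank n with center density at least m^{n/2} / (2^{m-1+n/2} · n^{m-1} · (n+1)^{1/2}). -/

import Mathlib

open Finset

noncomputable def derAt1 (n i : ℕ) : (Fin (n + 1) → ℤ) →ₗ[ℤ] ℤ :=
  ∑ j : Fin (n + 1), (((j : ℕ).descFactorial i : ℤ)) • LinearMap.proj j

noncomputable def craigLat (n m l : ℕ) : Submodule ℤ (Fin (n + 1) → ℤ) :=
  LinearMap.ker (derAt1 n 0) ⊓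
    ⨅ i ∈ Finset.Ioo 0 m, Submodule.comap (derAt1 n i) (Ideal.span {(l : ℤ)})

noncomputable def rootLat (n : ℕ) : Submodule ℤ (Fin (n + 1) → ℤ) :=
  LinearMap.ker (derAt1 n 0)

/-! ### Auxiliary lemmas -/

lemma mul_descFactorial (x k : ℕ) :
    x * x.descFactorial k = x.descFactorial (k+1) + k * x.descFactorial k := by
  rcases lt_or_ge x k with h | h
  · rw [Nat.descFactorial_eq_zero_iff_lt.2 h, Nat.descFactorial_eq_zero_iff_lt.2 (by omega)]
    ring
  · rw [Nat.descFactorial_succ]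
    have h2 : x - k + k = x := by omega
    nlinarith [h2]

lemma pow_eq_sum_desc (i : ℕ) :
    ∃ c : ℕ → ℕ, ∀ x : ℕ, x ^ i = ∑ k ∈ Finset.range (i+1), c k * x.descFactorial k := by
  induction i with
  | zero => exact ⟨fun _ => 1, fun x => by simp⟩
  | succ i ih =>
    obtain ⟨c, hc⟩ := ih
    set a : ℕ → ℕ := fun k => if k = 0 then 0 else c (k-1) with ha
    set b : ℕ → ℕ := fun k => k * (if k ≤ i then c k else 0) with hb
    refine ⟨fun k => a k + b k, fun x => ?_⟩
    set d : ℕ → ℕ := fun k => x.descFactorial k with hd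
    have key : x ^ (i+1) = ∑ k ∈ Finset.range (i+1), c k * d (k+1)
        + ∑ k ∈ Finset.range (i+1), c k * k * d k := by
      rw [pow_succ, hc, Finset.sum_mul, ← Finset.sum_add_distrib]
      refine Finset.sum_congr rfl fun k _ => ?_
      have := mul_descFactorial x k
      simp only [hd]
      nlinarith [this]
    rw [key]
    have e1 : ∑ k ∈ Finset.range (i+2), a k * d k = ∑ k ∈ Finset.range (i+1), c k * d (k+1) := by
      rw [Finset.sum_range_succ']
      simp [ha]
    have e2 : ∑ k ∈ Finset.range (i+2), b k * d k = ∑ k ∈ Finset.range (i+1), c k * k * d k := by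
      rw [Finset.sum_range_succ]
      simp only [hb, if_neg (by omega : ¬ i+1 ≤ i), mul_zero, zero_mul, add_zero]
      refine Finset.sum_congr rfl fun k hk => ?_
      rw [if_pos (by simpa [Nat.lt_succ_iff] using Finset.mem_range.1 hk)]
      ring
    have : ∀ k, (a k + b k) * d k = a k * d k + b k * d k := fun k => by ring
    change _ = ∑ k ∈ Finset.range (i+2), (a k + b k) * d k
    simp only [this, Finset.sum_add_distrib, e1, e2]

lemma multiset_newton {F : Type*} [CommRing F] (s : Multiset F) (k : ℕ) :
    (k : F) * s.esymm k = (-1)^(k+1) *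
      ∑ a ∈ (Finset.HasAntidiagonal.antidiagonal k).filter (fun a => a.1 < k),
        (-1)^a.1 * s.esymm a.1 * (s.map (fun x => x ^ a.2)).sum := by
  obtain ⟨L, rfl⟩ : ∃ L : List F, (L : Multiset F) = s := ⟨s.toList, s.coe_toList⟩
  have hmap : (Finset.univ.val.map (fun i : Fin L.length => L.get i)) = (L : Multiset F) := by
    have : (Finset.univ.val : Multiset (Fin L.length))
        = ((List.finRange L.length : List (Fin L.length)) : Multiset (Fin L.length)) := by
      simp [Fin.univ_def, Fintype.elems]
    rw [this, Multiset.map_coe, List.map_get_finRange]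
  have key := MvPolynomial.mul_esymm_eq_sum (Fin L.length) F k
  have h2 := congrArg (MvPolynomial.aeval (fun i : Fin L.length => L.get i)) key
  simp only [map_mul, map_sum, map_pow, map_natCast, map_neg, map_one] at h2
  have he : ∀ j, (MvPolynomial.aeval (fun i : Fin L.length => L.get i))
      (MvPolynomial.esymm (Fin L.length) F j) = (L : Multiset F).esymm j := by
    intro j
    rw [MvPolynomial.aeval_esymm_eq_multiset_esymm, hmap]
  have hp : ∀ j, (MvPolynomial.aeval (fun i : Fin L.length => L.get i))
      (MvPolynomial.psum (Fin L.length) F j) = ((L : Multiset F).map (fun x => x ^ j)).sum := by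
    intro j
    simp only [MvPolynomial.psum, map_sum, map_pow, MvPolynomial.aeval_X]
    rw [← hmap, Multiset.map_map]
    rfl
  simp only [he, hp] at h2
  exact h2

lemma esymm_eq_of_psum_eq {F : Type*} [Field F] {A B : Multiset F} {w : ℕ}
    (hA : Multiset.card A = w) (hB : Multiset.card B = w)
    (hchar : ∀ k : ℕ, 0 < k → k ≤ w → (k : F) ≠ 0)
    (hp : ∀ k : ℕ, 0 < k → k ≤ w → (A.map (fun x => x ^ k)).sum = (B.map (fun x => x ^ k)).sum)
    (k : ℕ) : A.esymm k = B.esymm k := by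
  induction k using Nat.strong_induction_on with
  | _ k ih =>
    rcases Nat.eq_zero_or_pos k with rfl | hk
    · simp [Multiset.esymm]
    rcases le_or_gt k w with hkw | hkw
    · have nA := multiset_newton A k
      have nB := multiset_newton B k
      have hsum : ∑ a ∈ (Finset.HasAntidiagonal.antidiagonal k).filter (fun a => a.1 < k),
          (-1:F)^a.1 * A.esymm a.1 * (A.map (fun x => x ^ a.2)).sum
          = ∑ a ∈ (Finset.HasAntidiagonal.antidiagonal k).filter (fun a => a.1 < k),
          (-1:F)^a.1 * B.esymm a.1 * (B.map (fun x => x ^ a.2)).sum := by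
        refine Finset.sum_congr rfl fun a hamem => ?_
        simp only [Finset.mem_filter, Finset.HasAntidiagonal.mem_antidiagonal] at hamem
        obtain ⟨hadd, hlt⟩ := hamem
        rw [ih a.1 (by omega), hp a.2 (by omega) (by omega)]
      have : (k:F) * A.esymm k = (k:F) * B.esymm k := by rw [nA, nB, hsum]
      exact mul_left_cancel₀ (hchar k hk hkw) this
    · have hz : ∀ (C : Multiset F), Multiset.card C = w → C.esymm k = 0 := by
        intro C hC
        rw [Multiset.esymm, Multiset.powersetCard_eq_empty _ (by omega), Multiset.map_zero,
          Multiset.sum_zero]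
      rw [hz A hA, hz B hB]

lemma multiset_eq_of_esymm_eq {F : Type*} [Field F] {A B : Multiset F}
    (hcard : Multiset.card A = Multiset.card B)
    (he : ∀ k, A.esymm k = B.esymm k) : A = B := by
  have hP : (A.map (fun a => Polynomial.X - Polynomial.C a)).prod
      = (B.map (fun a => Polynomial.X - Polynomial.C a)).prod := by
    apply Polynomial.ext
    intro j
    rcases le_or_gt j (Multiset.card A) with hj | hj
    · rw [Multiset.prod_X_sub_C_coeff A hj, Multiset.prod_X_sub_C_coeff B (hcard ▸ hj), hcard, he]
    · have hzero : ∀ (C : Multiset F), Multiset.card C = Multiset.card A →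
          ((C.map (fun a => Polynomial.X - Polynomial.C a)).prod).coeff j = 0 := by
        intro C hC
        apply Polynomial.coeff_eq_zero_of_natDegree_lt
        rw [Polynomial.natDegree_multiset_prod_X_sub_C_eq_card, hC]
        exact hj
      rw [hzero A rfl, hzero B hcard.symm]
  have := congrArg Polynomial.roots hP
  rwa [Polynomial.roots_multiset_prod_X_sub_C, Polynomial.roots_multiset_prod_X_sub_C] at this

lemma derAt1_apply (n i : ℕ) (v : Fin (n+1) → ℤ) :
    derAt1 n i v = ∑ j : Fin (n+1), ((j : ℕ).descFactorial i : ℤ) * v j := by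
  simp [derAt1, LinearMap.sum_apply, LinearMap.proj_apply, smul_eq_mul]

lemma derAt1_single (n i : ℕ) (a : Fin (n+1)) :
    derAt1 n i (Pi.single a 1) = ((a : ℕ).descFactorial i : ℤ) := by
  rw [derAt1_apply]
  rw [Finset.sum_eq_single a]
  · simp
  · intro b _ hb
    simp [Pi.single_apply, hb]
  · simp

lemma mem_craig_iff (n m l : ℕ) (v : Fin (n+1) → ℤ) :
    v ∈ craigLat n m l ↔ (∑ j : Fin (n+1), v j = 0) ∧
      ∀ i, 0 < i → i < m → (l:ℤ) ∣ ∑ j : Fin (n+1), ((j : ℕ).descFactorial i : ℤ) * v j := by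
  simp only [craigLat, Submodule.mem_inf, LinearMap.mem_ker, Submodule.mem_iInf,
    Submodule.mem_comap, Ideal.mem_span_singleton, derAt1_apply, Finset.mem_Ioo,
    Nat.descFactorial_zero, Nat.cast_one, one_mul]
  constructor
  · rintro ⟨h0, h⟩
    exact ⟨h0, fun i hi him => h i ⟨hi, him⟩⟩
  · rintro ⟨h0, h⟩
    exact ⟨h0, fun i hi => h i hi.1 hi.2⟩

/-! ### Minimum norm -/

lemma craig_min_norm (n m l : ℕ) (hm : 0 < m) (hmn : 2*m < n) (hl : l.Prime) (hnl : n < l)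
    (v : Fin (n+1) → ℤ) (hv : v ∈ craigLat n m l) (hv0 : v ≠ 0) :
    (2 * m : ℤ) ≤ ∑ j, (v j)^2 := by
  haveI : Fact l.Prime := ⟨hl⟩
  obtain ⟨hsum, hdvd⟩ := (mem_craig_iff n m l v).1 hv
  by_contra hcon
  push_neg at hcon
  have hS : ∑ j : Fin (n+1), (v j)^2 < 2*(m:ℤ) := by exact_mod_cast hcon
  -- power sums are divisible by l
  have hpow : ∀ i, i < m → (l:ℤ) ∣ ∑ j : Fin (n+1), ((j:ℕ) : ℤ)^i * v j := by
    intro i him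
    obtain ⟨c, hc⟩ := pow_eq_sum_desc i
    have key : ∑ j : Fin (n+1), ((j:ℕ):ℤ)^i * v j
        = ∑ k ∈ Finset.range (i+1), (c k : ℤ)
            * ∑ j : Fin (n+1), ((j:ℕ).descFactorial k : ℤ) * v j := by
      have h1 : ∀ j : Fin (n+1), ((j:ℕ):ℤ)^i * v j
          = ∑ k ∈ Finset.range (i+1), (c k : ℤ) * (((j:ℕ).descFactorial k : ℤ) * v j) := by
        intro j
        have h0 := congrArg (Nat.cast : ℕ → ℤ) (hc (j : ℕ))
        push_cast at h0
        rw [h0, Finset.sum_mul]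
        exact Finset.sum_congr rfl fun k _ => by ring
      simp only [h1]
      rw [Finset.sum_comm]
      simp only [Finset.mul_sum]
    rw [key]
    refine Finset.dvd_sum fun k hk => ?_
    rcases Nat.eq_zero_or_pos k with rfl | hkpos
    · simp only [Nat.descFactorial_zero, Nat.cast_one, one_mul, hsum, mul_zero]
      exact dvd_zero _
    · exact Dvd.dvd.mul_left (hdvd k hkpos (by simp only [Finset.mem_range] at hk; omega)) _
  set F := ZMod l
  set A : Multiset F := (Finset.univ.val : Multiset (Fin (n+1))).bind
    (fun j => Multiset.replicate (v j).toNat (((j:ℕ) : F))) with hA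
  set B : Multiset F := (Finset.univ.val : Multiset (Fin (n+1))).bind
    (fun j => Multiset.replicate (-(v j)).toNat (((j:ℕ) : F))) with hB
  have hcardA : Multiset.card A = ∑ j : Fin (n+1), (v j).toNat := by
    simp [hA, Multiset.card_bind, Finset.sum, Multiset.map_map, Function.comp]
  have hcardB : Multiset.card B = ∑ j : Fin (n+1), (-(v j)).toNat := by
    simp [hB, Multiset.card_bind, Finset.sum, Multiset.map_map, Function.comp]
  have hw : ∑ j : Fin (n+1), (v j).toNat = ∑ j : Fin (n+1), (-(v j)).toNat := by
    have : (∑ j : Fin (n+1), ((v j).toNat : ℤ)) - ∑ j : Fin (n+1), ((-(v j)).toNat : ℤ) = 0 := by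
      rw [← Finset.sum_sub_distrib]
      rw [← hsum]
      exact Finset.sum_congr rfl fun j _ => Int.toNat_sub_toNat_neg (v j)
    have h2 : (∑ j : Fin (n+1), ((v j).toNat : ℤ)) = ∑ j : Fin (n+1), ((-(v j)).toNat : ℤ) := by
      omega
    exact_mod_cast h2
  set w := ∑ j : Fin (n+1), (v j).toNat with hwdef
  have habs : ∀ x : ℤ, |x| ≤ x^2 := by
    intro x
    rcases eq_or_ne x 0 with rfl | hx
    · simp
    · have h1 : 1 ≤ |x| := Int.one_le_abs (by omega)
      nlinarith [abs_nonneg x, sq_abs x]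
  have h2w : 2 * (w:ℤ) ≤ ∑ j : Fin (n+1), (v j)^2 := by
    have : 2 * (w:ℤ) = ∑ j : Fin (n+1), |v j| := by
      have : ∀ j : Fin (n+1), |v j| = ((v j).toNat : ℤ) + ((-(v j)).toNat : ℤ) := by
        intro j; rcases le_or_gt 0 (v j) with h | h
        · rw [abs_of_nonneg h]; omega
        · rw [abs_of_neg h]; omega
      rw [Finset.sum_congr rfl fun j _ => this j, Finset.sum_add_distrib]
      have e1 : ∑ x : Fin (n+1), ((-v x).toNat : ℤ) = ∑ x : Fin (n+1), ((v x).toNat : ℤ) := by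
        exact_mod_cast congrArg (Nat.cast : ℕ → ℤ) hw.symm
      rw [e1]
      push_cast [hwdef]
      ring
    rw [this]
    exact Finset.sum_le_sum fun j _ => habs (v j)
  have hwm : w < m := by omega
  have hpsum : ∀ k : ℕ, 0 < k → k ≤ w →
      (A.map (fun x => x ^ k)).sum = (B.map (fun x => x ^ k)).sum := by
    intro k hk hkw
    have hmapA : (A.map (fun x => x ^ k)).sum
        = ∑ j : Fin (n+1), ((v j).toNat : F) * ((j:ℕ) : F)^k := by
      simp [hA, Multiset.map_bind, Multiset.sum_bind, Multiset.map_replicate,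
        Multiset.sum_replicate, Finset.sum, Multiset.map_map, Function.comp, nsmul_eq_mul]
    have hmapB : (B.map (fun x => x ^ k)).sum
        = ∑ j : Fin (n+1), ((-(v j)).toNat : F) * ((j:ℕ) : F)^k := by
      simp [hB, Multiset.map_bind, Multiset.sum_bind, Multiset.map_replicate,
        Multiset.sum_replicate, Finset.sum, Multiset.map_map, Function.comp, nsmul_eq_mul]
    rw [hmapA, hmapB, ← sub_eq_zero, ← Finset.sum_sub_distrib]
    have : ∀ j : Fin (n+1), ((v j).toNat : F) * ((j:ℕ) : F)^k
        - ((-(v j)).toNat : F) * ((j:ℕ) : F)^k = (((j:ℕ) : ℤ)^k * v j : ℤ) := by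
      intro j
      have h3 : (((v j).toNat : ℤ) - ((-(v j)).toNat : ℤ)) = v j := Int.toNat_sub_toNat_neg (v j)
      have := congrArg (Int.cast : ℤ → F) h3
      push_cast at this ⊢
      rw [← sub_mul, this]; simp only [F, Int.cast_mul, Int.cast_pow, Int.cast_natCast]; ring
    rw [Finset.sum_congr rfl fun j _ => this j, ← Int.cast_sum]
    rw [ZMod.intCast_zmod_eq_zero_iff_dvd]
    exact hpow k (by omega)
  have hchar : ∀ k : ℕ, 0 < k → k ≤ w → (k : F) ≠ 0 := by
    intro k hk hkw hzero
    rw [ZMod.natCast_eq_zero_iff] at hzero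
    have := Nat.le_of_dvd hk hzero
    omega
  have hAB : A = B :=
    multiset_eq_of_esymm_eq (by rw [hcardA, hcardB, ← hw])
      (esymm_eq_of_psum_eq hcardA (by rw [hcardB, ← hw]) hchar hpsum)
  have hinj : ∀ j1 j2 : Fin (n+1), ((j1:ℕ) : F) = ((j2:ℕ) : F) → j1 = j2 := by
    intro j1 j2 h
    have h1 := ZMod.val_cast_of_lt (a := (j1:ℕ)) (by omega : (j1:ℕ) < l)
    have h2 := ZMod.val_cast_of_lt (a := (j2:ℕ)) (by omega : (j2:ℕ) < l)
    have : (j1:ℕ) = (j2:ℕ) := by rw [← h1, ← h2, h]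
    exact Fin.ext this
  obtain ⟨j0, hj0⟩ : ∃ j0, v j0 ≠ 0 := by
    by_contra h
    push_neg at h
    exact hv0 (funext h)
  rcases lt_or_gt_of_ne hj0 with hneg | hpos
  · have hmem : ((j0:ℕ) : F) ∈ B := by
      rw [hB, Multiset.mem_bind]
      exact ⟨j0, Finset.mem_univ_val _, Multiset.mem_replicate.2 ⟨by omega, rfl⟩⟩
    rw [← hAB, hA, Multiset.mem_bind] at hmem
    obtain ⟨j1, _, hmem⟩ := hmem
    rw [Multiset.mem_replicate] at hmem
    obtain ⟨hne, heq⟩ := hmem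
    have := hinj j0 j1 heq
    subst this
    omega
  · have hmem : ((j0:ℕ) : F) ∈ A := by
      rw [hA, Multiset.mem_bind]
      exact ⟨j0, Finset.mem_univ_val _, Multiset.mem_replicate.2 ⟨by omega, rfl⟩⟩
    rw [hAB, hB, Multiset.mem_bind] at hmem
    obtain ⟨j1, _, hmem⟩ := hmem
    rw [Multiset.mem_replicate] at hmem
    obtain ⟨hne, heq⟩ := hmem
    have := hinj j0 j1 heq
    subst this
    omega

/-! ### Index -/

noncomputable def craigHom (n m l : ℕ) :
    ((rootLat n).toAddSubgroup) →+ (Fin (m-1) → ZMod l) where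
  toFun := fun x => fun i => ((derAt1 n ((i:ℕ)+1) (x : Fin (n+1) → ℤ) : ℤ) : ZMod l)
  map_zero' := by
    funext i
    show (((derAt1 n ((i:ℕ)+1)) ((0 : (rootLat n).toAddSubgroup) : Fin (n+1) → ℤ) : ℤ) : ZMod l)
      = 0
    rw [ZeroMemClass.coe_zero, map_zero, Int.cast_zero]
  map_add' := by
    intro x y
    funext i
    show (((derAt1 n ((i:ℕ)+1)) ((x + y : (rootLat n).toAddSubgroup) : Fin (n+1) → ℤ) : ℤ)
        : ZMod l)
      = (((derAt1 n ((i:ℕ)+1)) (x : Fin (n+1) → ℤ) : ℤ) : ZMod l)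
        + (((derAt1 n ((i:ℕ)+1)) (y : Fin (n+1) → ℤ) : ℤ) : ZMod l)
    rw [AddSubgroup.coe_add, map_add, Int.cast_add]

lemma craigHom_apply (n m l : ℕ) (x : ((rootLat n).toAddSubgroup)) (i : Fin (m-1)) :
    craigHom n m l x i = ((derAt1 n ((i:ℕ)+1) (x : Fin (n+1) → ℤ) : ℤ) : ZMod l) := rfl

lemma craig_index (n m l : ℕ) (hm : 0 < m) (hmn : 2*m < n) (hl : l.Prime) (hnl : n < l) :
    (((craigLat n m l).toAddSubgroup).addSubgroupOf ((rootLat n).toAddSubgroup)).index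
      = l ^ (m - 1) := by
  haveI : Fact l.Prime := ⟨hl⟩
  set G := (rootLat n).toAddSubgroup
  set φ := craigHom n m l with hφ
  have hker : φ.ker = ((craigLat n m l).toAddSubgroup).addSubgroupOf G := by
    ext x
    simp only [AddMonoidHom.mem_ker, AddSubgroup.mem_addSubgroupOf,
      Submodule.mem_toAddSubgroup]
    rw [funext_iff]
    simp only [hφ, craigHom_apply, Pi.zero_apply]
    constructor
    · intro h
      rw [mem_craig_iff]
      refine ⟨?_, ?_⟩
      · have hx := x.2
        simp only [G, Submodule.mem_toAddSubgroup, rootLat, LinearMap.mem_ker, derAt1_apply] at hx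
        simpa using hx
      · intro i hi him
        have h2 := h ⟨i-1, by omega⟩
        rw [ZMod.intCast_zmod_eq_zero_iff_dvd] at h2
        rw [← derAt1_apply]
        have h3 : ((⟨i-1, by omega⟩ : Fin (m-1)) : ℕ) + 1 = i := by simp; omega
        rwa [h3] at h2
    · intro h i
      rw [mem_craig_iff] at h
      have := h.2 ((i:ℕ)+1) (by omega) (by omega)
      rw [derAt1_apply]
      rw [ZMod.intCast_zmod_eq_zero_iff_dvd]
      exact_mod_cast this
  have hsurj : Function.Surjective φ := by
    intro t
    set M : Matrix (Fin (m-1)) (Fin (m-1)) (ZMod l) :=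
      fun i k => (((k:ℕ)+1).descFactorial ((i:ℕ)+1) : ZMod l) with hM
    have htri : M.BlockTriangular id := by
      intro i k hik
      simp only [hM]
      rw [Nat.descFactorial_eq_zero_iff_lt.2 (by simp at hik; omega), Nat.cast_zero]
    have hdet : IsUnit M.det := by
      rw [Matrix.det_of_upperTriangular htri, isUnit_iff_ne_zero, Finset.prod_ne_zero_iff]
      intro i _
      simp only [hM, Matrix.diag_apply]
      rw [Nat.descFactorial_self]
      have : ¬ l ∣ Nat.factorial ((i:ℕ)+1) := by
        intro hdvd
        have := (Nat.Prime.dvd_factorial hl).1 hdvd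
        omega
      rw [Ne, ZMod.natCast_eq_zero_iff]
      exact this
    set c : Fin (m-1) → ZMod l := M⁻¹.mulVec t with hc
    have hMc : M.mulVec c = t := by
      rw [hc, Matrix.mulVec_mulVec, Matrix.mul_nonsing_inv _ hdet, Matrix.one_mulVec]
    set x : Fin (n+1) → ℤ :=
      ∑ k : Fin (m-1), (((c k).val : ℤ))
        • (Pi.single (⟨(k:ℕ)+1, by omega⟩ : Fin (n+1)) 1 - Pi.single 0 1) with hx
    have hder : ∀ i : ℕ, derAt1 n i x
        = ∑ k : Fin (m-1), ((c k).val : ℤ)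
            * ((((k:ℕ)+1).descFactorial i : ℤ) - ((0:ℕ).descFactorial i : ℤ)) := by
      intro i
      rw [hx, map_sum]
      refine Finset.sum_congr rfl fun k _ => ?_
      rw [LinearMap.map_smul, map_sub, derAt1_single, derAt1_single]
      simp [smul_eq_mul]
    have hxmem : x ∈ rootLat n := by
      simp only [rootLat, LinearMap.mem_ker]
      rw [hder 0]
      simp
    refine ⟨⟨x, hxmem⟩, ?_⟩
    ext i
    rw [hφ, craigHom_apply]
    rw [hder ((i:ℕ)+1)]
    have hzero : ((0:ℕ).descFactorial ((i:ℕ)+1) : ℤ) = 0 := by simp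
    rw [← hMc]
    simp only [Matrix.mulVec, dotProduct, hM]
    push_cast [hzero]
    simp only [sub_zero]
    refine Finset.sum_congr rfl fun k _ => ?_
    rw [ZMod.natCast_val, ZMod.cast_id]
    ring
  rw [← hker, AddSubgroup.index_ker]
  rw [AddMonoidHom.range_eq_top.2 hsurj]
  rw [AddSubgroup.card_top]
  rw [Nat.card_pi]
  simp [Nat.card_zmod]

/-! ### The density inequality -/

lemma craig_density_ineq (n m l : ℕ) (hm : 0 < m) (hmn : 2*m < n) (hl : l.Prime)
    (hl2n : l ≤ 2*n) :
    (Real.sqrt (2 * m) / 2) ^ n / ((l : ℝ) ^ (m - 1) * Real.sqrt (n + 1))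
      ≥ (m : ℝ) ^ ((n : ℝ) / 2) /
          ((2 : ℝ) ^ ((m : ℝ) - 1 + (n : ℝ) / 2) * (n : ℝ) ^ (m - 1) *
            Real.sqrt (n + 1)) := by
  have hn' : 0 < n := by omega
  have hn0 : (0:ℝ) < n := by exact_mod_cast hn'
  have hs : (0:ℝ) < Real.sqrt (n+1) := Real.sqrt_pos.2 (by positivity)
  have hm0 : (0:ℝ) < (m:ℝ) := by exact_mod_cast hm
  have hl0 : (0:ℝ) < (l:ℝ) := by exact_mod_cast hl.pos
  have h2m : (0:ℝ) ≤ 2*(m:ℝ) := by positivity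
  have hnum : (Real.sqrt (2 * (m:ℝ)) / 2) ^ n
      = (m:ℝ) ^ ((n:ℝ)/2) / (2:ℝ) ^ ((n:ℝ)/2) := by
    rw [div_pow, Real.sqrt_eq_rpow, ← Real.rpow_natCast ((2*(m:ℝ)) ^ ((1:ℝ)/2)) n,
      ← Real.rpow_mul h2m, Real.mul_rpow (by norm_num) (le_of_lt hm0)]
    rw [show (1:ℝ)/2*(n:ℕ) = (n:ℝ)/2 by ring]
    rw [show ((2:ℝ)^(n:ℕ)) = (2:ℝ) ^ ((n:ℕ):ℝ) by rw [Real.rpow_natCast]]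
    rw [show ((n:ℕ):ℝ) = (n:ℝ)/2 + (n:ℝ)/2 by ring]
    rw [Real.rpow_add (by norm_num)]
    field_simp
    ring
  have hden : (2:ℝ) ^ ((m:ℝ) - 1 + (n:ℝ)/2) = (2:ℝ)^(m-1) * (2:ℝ) ^ ((n:ℝ)/2) := by
    rw [Real.rpow_add (by norm_num)]
    congr 1
    rw [show ((m:ℝ) - 1) = (((m-1 : ℕ)):ℝ) by push_cast [Nat.cast_sub hm]; ring]
    rw [Real.rpow_natCast]
  rw [ge_iff_le, hnum, hden]
  rw [div_div]
  have hlpow : (l:ℝ)^(m-1) ≤ (2:ℝ)^(m-1) * (n:ℝ)^(m-1) := by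
    rw [← mul_pow]
    apply pow_le_pow_left₀ (le_of_lt hl0)
    exact_mod_cast hl2n
  have h1 : (0:ℝ) < (2:ℝ) ^ ((n:ℝ)/2) := by positivity
  have h2 : (0:ℝ) ≤ (m:ℝ) ^ ((n:ℝ)/2) := by positivity
  apply div_le_div_of_nonneg_left h2 (by positivity)
  nlinarith [mul_le_mul_of_nonneg_right (mul_le_mul_of_nonneg_left hlpow h1.le) hs.le]

/-- Bertrand's postulate: for every `n ≥ 1` there is a prime `l` with `n < l ≤ 2n`;
consequently for each `n` and `m < n/2` there is a rank-`n` lattice (the analogous Craig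
lattice `A_n^{(m,l)}`, with minimum squared norm `≥ 2m` and index `l^{m-1}` in the root
lattice `A_n`) whose center density is at least
`m^{n/2} / (2^{m-1+n/2} n^{m-1} (n+1)^{1/2})`. -/
theorem bertrand_and_craig_density :
    (∀ n : ℕ, 0 < n → ∃ l : ℕ, l.Prime ∧ n < l ∧ l ≤ 2 * n) ∧
    (∀ n m : ℕ, 0 < m → 2 * m < n →
      ∃ l : ℕ, l.Prime ∧ n < l ∧ l ≤ 2 * n ∧
        (∀ v ∈ craigLat n m l, v ≠ 0 → (2 * m : ℤ) ≤ ∑ j, (v j) ^ 2) ∧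
        (((craigLat n m l).toAddSubgroup).addSubgroupOf ((rootLat n).toAddSubgroup)).index
          = l ^ (m - 1) ∧
        (Real.sqrt (2 * m) / 2) ^ n / ((l : ℝ) ^ (m - 1) * Real.sqrt (n + 1))
          ≥ (m : ℝ) ^ ((n : ℝ) / 2) /
              ((2 : ℝ) ^ ((m : ℝ) - 1 + (n : ℝ) / 2) * (n : ℝ) ^ (m - 1) *
                Real.sqrt (n + 1))) := by
  constructor
  · intro n hn
    exact Nat.exists_prime_lt_and_le_two_mul n hn.ne'
  · intro n m hm hmn
    obtain ⟨l, hl, hnl, hl2n⟩ := Nat.exists_prime_lt_and_le_two_mul n (by omega)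
    exact ⟨l, hl, hnl, hl2n,
      fun v hv hv0 => craig_min_norm n m l hm hmn hl hnl v hv hv0,
      craig_index n m l hm hmn hl hnl,
      craig_density_ineq n m l hm hmn hl hl2n⟩
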